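/- Let A ∈ S_d(ℝ) with spectral decomposition A = UDUᵀ (U orthogonal, D diagonal). Define A⁺ = UD⁺Uᵀ where D⁺ replaces each diagonal entry σᵢ by max(σᵢ, 0). Then A⁺ is the nearest positive semidefinite matrix to A in Frobenius norm, i.e., ‖A - A⁺‖_F ≤ ‖A - M‖_F for all M ∈ S_d(ℝ)⁺₀, with equality only for M = A⁺. -/

import Mathlib

open Matrix

/-- The Frobenius norm of a real matrix, `‖A‖_F = √(tr (Aᵀ A))`. -/
noncomputable def frobeniusNorm {d : ℕ} (A : Matrix (Fin d) (Fin d) ℝ) : ℝ :=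
  Real.sqrt (Aᵀ * A).trace

lemma frob_sq_eq {d : ℕ} (X : Matrix (Fin d) (Fin d) ℝ) :
    (Xᵀ * X).trace = ∑ j, ∑ i, (X i j) ^ 2 := by
  simp [Matrix.trace, Matrix.mul_apply, Matrix.diag, sq]

lemma frob_conj {d : ℕ} (U X : Matrix (Fin d) (Fin d) ℝ)
    (hU₁ : Uᵀ * U = 1) :
    ((U * X * Uᵀ)ᵀ * (U * X * Uᵀ)).trace = (Xᵀ * X).trace := by
  have : (U * X * Uᵀ)ᵀ * (U * X * Uᵀ) = U * (Xᵀ * X) * Uᵀ := by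
    simp only [Matrix.transpose_mul, Matrix.transpose_transpose]
    calc U * (Xᵀ * Uᵀ) * (U * X * Uᵀ)
        = U * Xᵀ * ((Uᵀ * U) * X) * Uᵀ := by noncomm_ring
      _ = U * (Xᵀ * X) * Uᵀ := by rw [hU₁]; noncomm_ring
  rw [this, Matrix.trace_mul_cycle, ← Matrix.mul_assoc, hU₁, Matrix.one_mul]

lemma diag_entry_nonneg {d : ℕ} {N : Matrix (Fin d) (Fin d) ℝ}
    (hN : N.PosSemidef) (i : Fin d) : 0 ≤ N i i := by
  have := hN.dotProduct_mulVec_nonneg (Pi.single i 1)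
  simpa [dotProduct, Matrix.mulVec, Pi.single_apply, Finset.sum_ite_eq,
    Finset.mul_sum] using this

lemma scalar_diag_eq (s n : ℝ) (hn : 0 ≤ n)
    (h : (s - n) ^ 2 = (s - max s 0) ^ 2) : n = max s 0 := by
  rcases le_or_gt 0 s with hs | hs
  · rw [max_eq_left hs] at h ⊢
    nlinarith
  · rw [max_eq_right hs.le] at h ⊢
    nlinarith

theorem semidefinite_projection {d : ℕ}
    (A U : Matrix (Fin d) (Fin d) ℝ) (σ : Fin d → ℝ)
    (hA : Aᵀ = A) (hU₁ : Uᵀ * U = 1) (hU₂ : U * Uᵀ = 1)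
    (hAdecomp : A = U * Matrix.diagonal σ * Uᵀ)
    (Aplus : Matrix (Fin d) (Fin d) ℝ)
    (hAplus : Aplus = U * Matrix.diagonal (fun i => max (σ i) 0) * Uᵀ) :
    ∀ M : Matrix (Fin d) (Fin d) ℝ, M.PosSemidef →
      frobeniusNorm (A - Aplus) ≤ frobeniusNorm (A - M) ∧
      (frobeniusNorm (A - Aplus) = frobeniusNorm (A - M) → M = Aplus) := by
  intro M hM
  set D : Matrix (Fin d) (Fin d) ℝ := Matrix.diagonal σ with hD
  set Dp : Matrix (Fin d) (Fin d) ℝ := Matrix.diagonal (fun i => max (σ i) 0) with hDp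
  set N : Matrix (Fin d) (Fin d) ℝ := Uᵀ * M * U with hN
  have hNps : N.PosSemidef := by
    have h := hM.conjTranspose_mul_mul_same U
    have hc : Uᴴ = Uᵀ := by
      ext i j; simp [Matrix.conjTranspose_apply]
    rwa [hc] at h
  have hMN : M = U * N * Uᵀ := by
    rw [hN]
    calc M = 1 * M * 1 := by rw [Matrix.one_mul, Matrix.mul_one]
      _ = (U * Uᵀ) * M * (U * Uᵀ) := by rw [hU₂]
      _ = U * (Uᵀ * M * U) * Uᵀ := by noncomm_ring
  have hAM : A - M = U * (D - N) * Uᵀ := by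
    rw [hAdecomp, hMN]; noncomm_ring
  have hAAp : A - Aplus = U * (D - Dp) * Uᵀ := by
    rw [hAdecomp, hAplus]; noncomm_ring
  have ht1 : ((A - Aplus)ᵀ * (A - Aplus)).trace = ∑ j, ∑ i, ((D - Dp) i j) ^ 2 := by
    rw [hAAp, frob_conj _ _ hU₁, frob_sq_eq]
  have ht2 : ((A - M)ᵀ * (A - M)).trace = ∑ j, ∑ i, ((D - N) i j) ^ 2 := by
    rw [hAM, frob_conj _ _ hU₁, frob_sq_eq]
  -- pointwise inequality
  have key : ∀ i j : Fin d, ((D - Dp) i j) ^ 2 ≤ ((D - N) i j) ^ 2 := by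
    intro i j
    by_cases hij : i = j
    · subst hij
      have hn : 0 ≤ N i i := diag_entry_nonneg hNps i
      simp only [Matrix.sub_apply, hD, hDp, Matrix.diagonal_apply_eq]
      rcases le_or_gt 0 (σ i) with h | h
      · simp [max_eq_left h]; positivity
      · have : max (σ i) 0 = 0 := max_eq_right h.le
        rw [this]
        nlinarith
    · simp [Matrix.sub_apply, hD, hDp, Matrix.diagonal_apply_ne' _ (fun h => hij h.symm)]
      positivity
  have hsumle : ∑ j, ∑ i, ((D - Dp) i j) ^ 2 ≤ ∑ j, ∑ i, ((D - N) i j) ^ 2 :=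
    Finset.sum_le_sum fun j _ => Finset.sum_le_sum fun i _ => key i j
  have h1nn : (0:ℝ) ≤ ∑ j, ∑ i, ((D - Dp) i j) ^ 2 := by positivity
  constructor
  · unfold frobeniusNorm
    rw [ht1, ht2]
    exact Real.sqrt_le_sqrt hsumle
  · intro heq
    unfold frobeniusNorm at heq
    rw [ht1, ht2] at heq
    have h2nn : (0:ℝ) ≤ ∑ j, ∑ i, ((D - N) i j) ^ 2 := by positivity
    have hsum : ∑ j, ∑ i, ((D - Dp) i j) ^ 2 = ∑ j, ∑ i, ((D - N) i j) ^ 2 :=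
      (Real.sqrt_inj h1nn h2nn).mp heq
    -- each inner sum must be equal, hence each term
    have hterm : ∀ i j : Fin d, ((D - N) i j) ^ 2 = ((D - Dp) i j) ^ 2 := by
      have hS : ∀ j : Fin d, ∑ i, (((D - N) i j) ^ 2 - ((D - Dp) i j) ^ 2) = 0 := by
        have htot : ∑ j, ∑ i, (((D - N) i j) ^ 2 - ((D - Dp) i j) ^ 2) = 0 := by
          simp only [Finset.sum_sub_distrib]
          linarith [hsum]
        intro j
        have := (Finset.sum_eq_zero_iff_of_nonneg (fun j _ =>
          Finset.sum_nonneg (fun i _ => sub_nonneg.mpr (key i j)))).mp htot j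
            (Finset.mem_univ j)
        exact this
      intro i j
      have := (Finset.sum_eq_zero_iff_of_nonneg (fun i _ =>
        sub_nonneg.mpr (key i j))).mp (hS j) i (Finset.mem_univ i)
      linarith
    have hNDp : N = Dp := by
      ext i j
      by_cases hij : i = j
      · subst hij
        have hn : 0 ≤ N i i := diag_entry_nonneg hNps i
        have h := hterm i i
        simp only [Matrix.sub_apply, hD, hDp, Matrix.diagonal_apply_eq] at h ⊢
        exact scalar_diag_eq _ _ hn h
      · have h := hterm i j
        simp only [Matrix.sub_apply, hD, hDp,
          Matrix.diagonal_apply_ne' _ (fun h => hij h.symm), zero_sub, neg_sq,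
          ne_eq, hij, not_false_eq_true] at h ⊢
        have h0 : N i j ^ 2 = 0 := by simpa using h
        exact pow_eq_zero_iff (n := 2) (by norm_num) |>.mp h0
    rw [hMN, hNDp, hAplus]
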